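/- In the hypercube Q_n with n ≢ 0 (mod 4), n ≥ 2, the set B of vertices of odd weight (binary strings with an odd number of ones) is a distance-equalizer set: for any two distinct even-weight vertices v, w there exists an odd-weight vertex z with d(v,z) = d(w,z). -/

import Mathlib

/-- The weight of a vertex of the hypercube: number of coordinates equal to 1. -/
def wt {n : ℕ} (v : Fin n → Bool) : ℕ := (Finset.univ.filter fun i => v i = true).card

lemma zmod_even (m : ℕ) : Even m ↔ (m : ZMod 2) = 0 := by
  rw [Nat.even_iff, ← ZMod.natCast_mod]
  rcases Nat.mod_two_eq_zero_or_one m with h | h <;> simp [h]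

lemma zmod_odd (m : ℕ) : Odd m ↔ (m : ZMod 2) = 1 := by
  rw [Nat.odd_iff, ← ZMod.natCast_mod]
  rcases Nat.mod_two_eq_zero_or_one m with h | h <;> simp [h]

lemma cast_hd {n : ℕ} (v w : Fin n → Bool) :
    (hammingDist v w : ZMod 2) = (wt v : ZMod 2) + wt w := by
  unfold hammingDist wt
  rw [Finset.card_filter, Finset.card_filter, Finset.card_filter]
  push_cast
  rw [← Finset.sum_add_distrib]
  apply Finset.sum_congr rfl
  intro i _
  cases hv : v i <;> cases hw : w i <;> simp [hv, hw] <;> decide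

theorem stmt_9 (n : ℕ) (hn : 2 ≤ n) (h4 : n % 4 ≠ 0)
    (v w : Fin n → Bool) (hv : Even (wt v)) (hw : Even (wt w)) (hvw : v ≠ w) :
    ∃ z : Fin n → Bool, Odd (wt z) ∧ hammingDist v z = hammingDist w z := by
  classical
  set S := Finset.univ.filter (fun i => v i ≠ w i) with hS
  have hSd : hammingDist v w = S.card := rfl
  have hd_even : Even S.card := by
    rw [zmod_even, ← hSd, cast_hd, (zmod_even _).mp hv, (zmod_even _).mp hw]
    ring
  obtain ⟨k, hk⟩ := hd_even
  have hk2 : S.card = 2 * k := by omega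
  obtain ⟨A, hA_sub, hA_card⟩ := Finset.exists_subset_card_eq (s := S) (n := k) (by omega)
  have hvA : ∀ i ∈ A, v i ≠ w i := fun i hi => by
    have := hA_sub hi; simpa [hS] using this
  rcases Nat.even_or_odd k with hke | hko
  · -- k even: need to flip one extra coordinate outside S
    have hle : S.card ≤ n := by simpa using Finset.card_le_univ S
    have hSn : S.card < n := by
      rcases lt_or_eq_of_le hle with h | h
      · exact h
      · exfalso; obtain ⟨m, hm⟩ := hke; omega
    have hcompl : (Sᶜ : Finset (Fin n)).Nonempty := by
      rw [← Finset.card_pos, Finset.card_compl]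
      simp
      omega
    obtain ⟨j, hj⟩ := hcompl
    rw [Finset.mem_compl] at hj
    have hjvw : v j = w j := by
      by_contra h
      exact hj (by simp [hS, h])
    have hjA : j ∉ A := fun h => hj (hA_sub h)
    have hjSA : j ∉ S \ A := fun h => hj (Finset.mem_sdiff.mp h).1
    set z : Fin n → Bool := fun i => if i = j then !(v j) else if i ∈ A then w i else v i
      with hz
    have hfv : Finset.univ.filter (fun i => v i ≠ z i) = insert j A := by
      ext i
      simp only [Finset.mem_filter, Finset.mem_univ, true_and, Finset.mem_insert, hz]
      by_cases hij : i = j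
      · subst hij; simp
      · by_cases hi : i ∈ A <;> simp [hij, hi, hvA i]
    have hfw : Finset.univ.filter (fun i => w i ≠ z i) = insert j (S \ A) := by
      ext i
      simp only [Finset.mem_filter, Finset.mem_univ, true_and, Finset.mem_insert,
        Finset.mem_sdiff, hz]
      by_cases hij : i = j
      · subst hij; simp [← hjvw]
      · by_cases hi : i ∈ A <;> simp [hij, hi, hS, ne_comm]
    have hd1 : hammingDist v z = k + 1 := by
      show (Finset.univ.filter (fun i => v i ≠ z i)).card = k + 1
      rw [hfv, Finset.card_insert_of_notMem hjA, hA_card]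
    have hd2 : hammingDist w z = k + 1 := by
      show (Finset.univ.filter (fun i => w i ≠ z i)).card = k + 1
      rw [hfw, Finset.card_insert_of_notMem hjSA, Finset.card_sdiff_of_subset hA_sub, hA_card]
      omega
    refine ⟨z, ?_, hd1.trans hd2.symm⟩
    rw [zmod_odd]
    have h1 := cast_hd v z
    rw [hd1, (zmod_even _).mp hv, zero_add] at h1
    rw [← h1]
    push_cast
    rw [(zmod_even _).mp hke]
    ring
  · -- k odd
    set z : Fin n → Bool := fun i => if i ∈ A then w i else v i with hz
    have hfv : Finset.univ.filter (fun i => v i ≠ z i) = A := by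
      ext i
      simp only [Finset.mem_filter, Finset.mem_univ, true_and, hz]
      by_cases hi : i ∈ A <;> simp [hi, hvA i]
    have hfw : Finset.univ.filter (fun i => w i ≠ z i) = S \ A := by
      ext i
      simp only [Finset.mem_filter, Finset.mem_univ, true_and, Finset.mem_sdiff, hz]
      by_cases hi : i ∈ A <;> simp [hi, hS, ne_comm]
    have hd1 : hammingDist v z = k := by
      show (Finset.univ.filter (fun i => v i ≠ z i)).card = k
      rw [hfv, hA_card]
    have hd2 : hammingDist w z = k := by
      show (Finset.univ.filter (fun i => w i ≠ z i)).card = k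
      rw [hfw, Finset.card_sdiff_of_subset hA_sub, hA_card]
      omega
    refine ⟨z, ?_, hd1.trans hd2.symm⟩
    rw [zmod_odd]
    have h1 := cast_hd v z
    rw [hd1, (zmod_even _).mp hv, zero_add] at h1
    rw [← h1]
    exact (zmod_odd k).mp hko
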